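/- Let the graph on n nodes be a disjoint union of fully connected components encoded by c : Fin n → Fin k, with Ā = D̃^{-1/2} Ã D̃^{-1/2} the symmetrically normalized adjacency matrix (Ã = A + I, D̃ its diagonal degree matrix). Let X ∈ ℝ^{n×F} be any node feature matrix and W ∈ ℝ^{F×F'} any weight matrix. Then for every node i, the i-th row of the pre-activation matrix Ā X W equals (1/|S|) · (Σ_{v ∈ S} X_{v:}) W, where S = {v : c(v) = c(i)} is the component containing i. -/

import Mathlib

open Matrix

/-- For a disjoint union of fully connected components encoded by `c`, and
`Ā = D̃^{-1/2} Ã D̃^{-1/2}`, the `i`-th row of the pre-activation `Ā X W` equals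
`(1/|S|) • (∑ v ∈ S, X v) ᵥ* W`, where `S` is the component of `i`. -/
theorem preactivation_row_eq_mean (n k F F' : ℕ) (c : Fin n → Fin k)
    (A Atil Dinvsqrt Abar : Matrix (Fin n) (Fin n) ℝ)
    (X : Matrix (Fin n) (Fin F) ℝ) (W : Matrix (Fin F) (Fin F') ℝ)
    (hA : ∀ i j, A i j = if i ≠ j ∧ c i = c j then 1 else 0)
    (hAtil : Atil = A + 1)
    (hD : Dinvsqrt = Matrix.diagonal (fun i => (Real.sqrt (∑ j, Atil i j))⁻¹))
    (hAbar : Abar = Dinvsqrt * Atil * Dinvsqrt) :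
    ∀ i : Fin n,
      (Abar * X * W) i =
        ((((Finset.univ.filter (fun v => c v = c i)).card : ℝ))⁻¹ •
          ∑ v ∈ Finset.univ.filter (fun v => c v = c i), X v) ᵥ* W := by
  intro i
  have hAtil' : ∀ a b, Atil a b = if c a = c b then 1 else 0 := by
    intro a b
    by_cases h : a = b
    · subst h; simp [hAtil, hA]
    · simp [hAtil, hA, Matrix.one_apply, h]
  have hsum : ∀ a, ∑ j, Atil a j =
      ((Finset.univ.filter (fun v => c v = c a)).card : ℝ) := by
    intro a
    simp only [hAtil']
    have : ∀ j, (if c a = c j then (1:ℝ) else 0) = if c j = c a then 1 else 0 := by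
      intro j; simp [eq_comm]
    simp_rw [this]
    rw [Finset.sum_boole]
  have hcard : ∀ a, (0:ℝ) < ((Finset.univ.filter (fun v => c v = c a)).card : ℝ) := by
    intro a
    have : a ∈ Finset.univ.filter (fun v => c v = c a) := by simp
    exact_mod_cast Finset.card_pos.mpr ⟨a, this⟩
  have hAbar' : ∀ a b, Abar a b = if c a = c b then
      ((Finset.univ.filter (fun v => c v = c a)).card : ℝ)⁻¹ else 0 := by
    intro a b
    rw [hAbar, hD, Matrix.mul_diagonal, Matrix.diagonal_mul, hsum, hsum, hAtil']
    by_cases h : c a = c b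
    · have hfilt : (Finset.univ.filter (fun v => c v = c b))
          = (Finset.univ.filter (fun v => c v = c a)) := by
        apply Finset.filter_congr; intro x _; simp [h]
      rw [hfilt]
      simp only [h, if_true, mul_one]
      rw [← mul_inv, Real.mul_self_sqrt (Nat.cast_nonneg _)]
    · simp [h]
  have hrow : ∀ f, (Abar * X) i f =
      ((Finset.univ.filter (fun v => c v = c i)).card : ℝ)⁻¹ *
        ∑ v ∈ Finset.univ.filter (fun v => c v = c i), X v f := by
    intro f
    rw [Matrix.mul_apply]
    rw [Finset.mul_sum]
    rw [← Finset.sum_filter_of_ne (p := fun v => c v = c i)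
      (f := fun j => Abar i j * X j f)]
    · apply Finset.sum_congr rfl
      intro v hv
      simp only [Finset.mem_filter] at hv
      rw [hAbar', if_pos hv.2.symm]
    · intro v _ hne
      by_contra hc
      rw [hAbar'] at hne
      split at hne
      · exact hc (by rw [‹c i = c v›])
      · exact hne (zero_mul _)
  funext j
  rw [Matrix.mul_apply, Matrix.vecMul, dotProduct]
  apply Finset.sum_congr rfl
  intro f _
  rw [hrow]
  simp [Finset.sum_apply, Finset.mul_sum]
  left; rw [← Finset.mul_sum]; congr 1; exact (Finset.sum_apply f _ _).symm
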